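/- arXiv:1205.3269 — 2 statements merged into one kernel-verified Lean document; each statement's English description precedes it below -/
import Mathlib

section
/- With quadratic coupling operators hₖ = (Mₖ + Xᵀ Rₖ/2)X and dispersion columns gₖ = Θ(Mₖᵀ + Rₖ X), the commutator i[hⱼ, gₖ] equals Θ Rₖ Θ (Mⱼᵀ + Rⱼ X); in particular each entry of i[hⱼ, gₖ] is an affine (degree ≤ 1) function of X. -/
open Finset

section helpers
variable {A : Type*} [Ring A] [Algebra ℂ A]

def cdcComm (a b : A) : A := a * b - b * a

lemma cdcComm_add_left (a b c : A) : cdcComm (a + b) c = cdcComm a c + cdcComm b c := by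
  simp [cdcComm, add_mul, mul_add]; abel

lemma cdcComm_add_right (a b c : A) : cdcComm a (b + c) = cdcComm a b + cdcComm a c := by
  simp [cdcComm, add_mul, mul_add]; abel

lemma cdcComm_smul_left (c : ℂ) (a b : A) : cdcComm (c • a) b = c • cdcComm a b := by
  simp [cdcComm, smul_mul_assoc, mul_smul_comm, smul_sub]

lemma cdcComm_smul_right (c : ℂ) (a b : A) : cdcComm a (c • b) = c • cdcComm a b := by
  simp [cdcComm, smul_mul_assoc, mul_smul_comm, smul_sub]

lemma cdcComm_sum_left {ι : Type*} (s : Finset ι) (f : ι → A) (b : A) :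
    cdcComm (∑ i ∈ s, f i) b = ∑ i ∈ s, cdcComm (f i) b := by
  simp [cdcComm, sum_mul, mul_sum, Finset.sum_sub_distrib]

lemma cdcComm_sum_right {ι : Type*} (s : Finset ι) (f : ι → A) (b : A) :
    cdcComm b (∑ i ∈ s, f i) = ∑ i ∈ s, cdcComm b (f i) := by
  simp [cdcComm, sum_mul, mul_sum, Finset.sum_sub_distrib]

lemma cdcComm_mul_left (a b c : A) : cdcComm (a * b) c = a * cdcComm b c + cdcComm a c * b := by
  simp only [cdcComm]; noncomm_ring

lemma cdcComm_one_right (a : A) : cdcComm a 1 = 0 := by simp [cdcComm]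

end helpers

lemma cdc_sum3 {β : Type*} [AddCommMonoid β] {n : ℕ} (f : Fin n → Fin n → Fin n → β) :
    ∑ x, ∑ y, ∑ u, f x y u = ∑ u, ∑ y, ∑ x, f x y u := by
  calc ∑ x, ∑ y, ∑ u, f x y u = ∑ x, ∑ u, ∑ y, f x y u :=
        Finset.sum_congr rfl (fun x _ => by rw [Finset.sum_comm])
    _ = ∑ u, ∑ x, ∑ y, f x y u := by rw [Finset.sum_comm]
    _ = ∑ u, ∑ y, ∑ x, f x y u :=
        Finset.sum_congr rfl (fun u _ => by rw [Finset.sum_comm])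

lemma cdc_key {A : Type*} [Ring A] [Algebra ℂ A] {n : ℕ} (X : Fin n → A)
    (Θ : Matrix (Fin n) (Fin n) ℝ) (hΘ : Θ.transpose = -Θ)
    (hccr : ∀ p q, X p * X q - X q * X p = Complex.I • ((Θ p q : ℂ) • (1 : A)))
    (a : Fin n → ℝ) (S : Matrix (Fin n) (Fin n) ℝ) (hS : S.transpose = S) (t : Fin n) :
    Complex.I • cdcComm (∑ p, (a p : ℂ) • X p
        + ((1 : ℂ)/2) • ∑ p, ∑ q, (S p q : ℂ) • (X p * X q)) (X t)
      = ∑ u, (Θ t u : ℂ) • ((a u : ℂ) • (1 : A) + ∑ p, (S u p : ℂ) • X p) := by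
  have hskew : ∀ p q, Θ p q = -Θ q p := fun p q => by
    have := congrFun (congrFun hΘ q) p
    simpa [Matrix.transpose_apply] using this
  have hSsym : ∀ p q, S p q = S q p := fun p q =>
    (congrFun (congrFun hS p) q).symm
  have hc : ∀ p q, cdcComm (X p) (X q) = Complex.I • ((Θ p q : ℂ) • (1:A)) := hccr
  rw [cdcComm_add_left, cdcComm_sum_left, cdcComm_smul_left, cdcComm_sum_left]
  simp only [cdcComm_smul_left, cdcComm_sum_left, cdcComm_mul_left, hc, smul_add,
    Finset.smul_sum, smul_smul, mul_smul_comm, smul_mul_assoc, mul_one, one_mul,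
    Finset.sum_add_distrib]
  have hI : Complex.I * Complex.I = -1 := Complex.I_mul_I
  have e3 : ∑ x : Fin n, ∑ y : Fin n, (Complex.I * (1 / 2 * ((S x y : ℂ) * (Complex.I * (Θ x t : ℂ))))) • X y
      = ∑ x : Fin n, ∑ y : Fin n, (Complex.I * (1 / 2 * ((S y x : ℂ) * (Complex.I * (Θ y t : ℂ))))) • X x :=
    by rw [Finset.sum_comm]
  have e4 : ∑ x : Fin n, ∑ y : Fin n, ((Θ t x : ℂ) * (S x y : ℂ)) • X y
      = ∑ x : Fin n, ∑ y : Fin n, ((Θ t y : ℂ) * (S y x : ℂ)) • X x :=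
    by rw [Finset.sum_comm]
  rw [e3, e4, ← Finset.sum_add_distrib]
  congr 1
  · apply Finset.sum_congr rfl; intro x _
    rw [hskew x t]
    push_cast
    congr 1
    linear_combination (-((a x : ℂ) * (Θ t x : ℂ))) * hI
  · apply Finset.sum_congr rfl; intro x _
    rw [← Finset.sum_add_distrib]
    apply Finset.sum_congr rfl; intro y _
    rw [← add_smul]
    congr 1
    rw [hSsym x y, hskew y t]
    push_cast
    linear_combination (-((S y x : ℂ) * (Θ t y : ℂ))) * hI

theorem coupling_dispersion_commutator {A : Type*} [Ring A] [Algebra ℂ A]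
    {n m : ℕ} (X : Fin n → A) (Θ : Matrix (Fin n) (Fin n) ℝ)
    (hΘ : Θ.transpose = -Θ)
    (hccr : ∀ p q, X p * X q - X q * X p = Complex.I • ((Θ p q : ℂ) • (1 : A)))
    (M : Matrix (Fin m) (Fin n) ℝ)
    (R : Fin m → Matrix (Fin n) (Fin n) ℝ) (hR : ∀ k, (R k).transpose = R k)
    (h : Fin m → A)
    (hdef : ∀ j, h j = ∑ p, (M j p : ℂ) • X p
      + ((1 : ℂ)/2) • ∑ p, ∑ q, (R j p q : ℂ) • (X p * X q))
    (g : Fin m → Fin n → A)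
    (hg : ∀ k ℓ, g k ℓ =
      ∑ s, (Θ ℓ s : ℂ) • ((M k s : ℂ) • (1 : A) + ∑ p, (R k s p : ℂ) • X p)) :
    ∀ j k ℓ, Complex.I • (h j * g k ℓ - g k ℓ * h j) =
      ∑ u, ((Θ * R k * Θ) ℓ u : ℂ) •
        ((M j u : ℂ) • (1 : A) + ∑ p, (R j u p : ℂ) • X p) := by
  intro j k ℓ
  have hcomm : ∀ p, Complex.I • cdcComm (h j) (X p)
      = ∑ u, (Θ p u : ℂ) • ((M j u : ℂ) • (1 : A) + ∑ q, (R j u q : ℂ) • X q) := by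
    intro p
    have := cdc_key X Θ hΘ hccr (M j) (R j) (hR j) p
    rw [← hdef j] at this
    exact this
  show Complex.I • cdcComm (h j) (g k ℓ) = _
  rw [hg]
  rw [cdcComm_sum_right, Finset.smul_sum]
  simp only [cdcComm_add_right, cdcComm_smul_right, cdcComm_one_right, smul_zero, zero_add,
    cdcComm_sum_right, Finset.smul_sum, smul_smul]
  simp only [show ∀ (x y : ℂ) (a : A), (Complex.I * (x * y)) • a = (x * y) • (Complex.I • a) by
    intro x y a; rw [mul_comm, mul_smul]]
  simp only [hcomm]
  simp only [Finset.smul_sum, smul_smul, Matrix.mul_apply]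
  push_cast
  simp only [Finset.sum_mul, Finset.sum_smul]
  exact cdc_sum3 (fun x y u => ((Θ ℓ x : ℂ) * (R k x y : ℂ) * (Θ y u : ℂ)) •
    ((M j u : ℂ) • (1 : A) + ∑ q, (R j u q : ℂ) • X q))
end

section
/- Let X satisfy CCRs [X,Xᵀ]=iΘ, let Y have columns Yₖ = RₖX with Rₖ real symmetric, M real m×n, J real antisymmetric m×m, and suppose the matrix YJM = ∑ₖ Φₖ Xₖ has all coefficient matrices Φₖ symmetric (equivalently YJM = −MᵀJYᵀ). Then for the cubic operator Δ := Xᵀ Y J M X, one has i[Δ, X] = 3 Θ Y J M X, i.e., for each component ℓ, i[Δ, X_ℓ] = 3 ∑ the ℓ-th entry of Θ Y J M X. -/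
theorem cubic_hamiltonian_commutator {A : Type*} [Ring A] [Algebra ℂ A]
    {n m : ℕ} (X : Fin n → A) (Θ : Matrix (Fin n) (Fin n) ℝ)
    (hΘ : Θ.transpose = -Θ)
    (hccr : ∀ p q, X p * X q - X q * X p = Complex.I • ((Θ p q : ℂ) • (1 : A)))
    (R : Fin m → Matrix (Fin n) (Fin n) ℝ) (hR : ∀ p, (R p).transpose = R p)
    (M : Matrix (Fin m) (Fin n) ℝ)
    (J : Matrix (Fin m) (Fin m) ℝ) (hJ : J.transpose = -J)
    (Φ : Fin n → Matrix (Fin n) (Fin n) ℝ)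
    (hΦdef : ∀ k j ℓ, Φ k j ℓ = ∑ p, ∑ s, J p s * R p j k * M s ℓ)
    (hΦsymm : ∀ k, (Φ k).transpose = Φ k)
    (Δ : A)
    (hΔ : Δ = ∑ j, ∑ k, ∑ ℓ, (Φ k j ℓ : ℂ) • (X j * X k * X ℓ)) :
    ∀ ℓ, Complex.I • (Δ * X ℓ - X ℓ * Δ) =
      (3 : ℂ) • ∑ a, ∑ k, ∑ b, ((Θ ℓ a * Φ k a b : ℝ) : ℂ) • (X k * X b) := by
  intro ℓ
  have hΘ' : ∀ p q : Fin n, Θ p q = - Θ q p := by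
    intro p q
    have := congrFun (congrFun hΘ q) p
    simpa [Matrix.transpose_apply] using this
  have hS1 : ∀ k j l : Fin n, Φ k j l = Φ k l j := by
    intro k j l
    have := congrFun (congrFun (hΦsymm k) l) j
    simpa [Matrix.transpose_apply] using this
  have hS2 : ∀ k j l : Fin n, Φ k j l = Φ j k l := by
    intro k j l
    rw [hΦdef, hΦdef]
    refine Finset.sum_congr rfl fun p _ => Finset.sum_congr rfl fun s _ => ?_
    have h : R p j k = R p k j := by
      have := congrFun (congrFun (hR p) k) j
      simpa [Matrix.transpose_apply] using this
    rw [h]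
  -- per-term commutator
  have key : ∀ j k l : Fin n,
      Complex.I • ((X j * X k * X l) * X ℓ - X ℓ * (X j * X k * X l)) =
        ((Θ ℓ l : ℝ) : ℂ) • (X j * X k) + ((Θ ℓ k : ℝ) : ℂ) • (X j * X l)
          + ((Θ ℓ j : ℝ) : ℂ) • (X k * X l) := by
    intro j k l
    have expand : (X j * X k * X l) * X ℓ - X ℓ * (X j * X k * X l)
        = X j * X k * (X l * X ℓ - X ℓ * X l)
          + X j * ((X k * X ℓ - X ℓ * X k) * X l)
          + (X j * X ℓ - X ℓ * X j) * (X k * X l) := by noncomm_ring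
    rw [expand, hccr, hccr, hccr]
    rw [hΘ' l ℓ, hΘ' k ℓ, hΘ' j ℓ]
    simp only [smul_smul, mul_smul_comm, smul_mul_assoc, mul_one, one_mul, smul_add]
    have hI : ∀ r : ℝ, Complex.I * (Complex.I * (((-r : ℝ)) : ℂ)) = (r : ℂ) := by
      intro r
      rw [← mul_assoc, Complex.I_mul_I]
      push_cast
      ring
    rw [hI, hI, hI]
  have expandΔ : Δ * X ℓ - X ℓ * Δ
      = ∑ j, ∑ k, ∑ l, (Φ k j l : ℂ) •
          ((X j * X k * X l) * X ℓ - X ℓ * (X j * X k * X l)) := by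
    rw [hΔ]
    simp only [Finset.sum_mul, Finset.mul_sum, smul_mul_assoc, mul_smul_comm, smul_sub,
      ← Finset.sum_sub_distrib]
  rw [expandΔ]
  simp only [Finset.smul_sum]
  have step : ∀ j k l : Fin n,
      Complex.I • ((Φ k j l : ℂ) • ((X j * X k * X l) * X ℓ - X ℓ * (X j * X k * X l))) =
        ((Φ k j l * Θ ℓ l : ℝ) : ℂ) • (X j * X k)
          + ((Φ k j l * Θ ℓ k : ℝ) : ℂ) • (X j * X l)
          + ((Φ k j l * Θ ℓ j : ℝ) : ℂ) • (X k * X l) := by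
    intro j k l
    rw [smul_comm, key j k l]
    push_cast
    rw [smul_add, smul_add, smul_smul, smul_smul, smul_smul]
  simp only [step, Finset.sum_add_distrib]
  rw [show (3 : ℂ) = 1 + 1 + 1 by norm_num]
  simp only [add_smul, one_smul, Finset.sum_add_distrib]
  have tri : ∀ f : Fin n → Fin n → Fin n → A,
      ∑ j, ∑ k, ∑ l, f j k l = ∑ l, ∑ j, ∑ k, f j k l := by
    intro f
    calc ∑ j, ∑ k, ∑ l, f j k l = ∑ j, ∑ l, ∑ k, f j k l :=
          Finset.sum_congr rfl (fun j _ => Finset.sum_comm)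
      _ = ∑ l, ∑ j, ∑ k, f j k l := Finset.sum_comm
  congr 1
  · congr 1
    · -- T1 = S
      have c1 : ∀ j k l : Fin n, ((Φ k j l * Θ ℓ l : ℝ) : ℂ) • (X j * X k)
          = ((Θ ℓ l * Φ j l k : ℝ) : ℂ) • (X j * X k) := by
        intro j k l
        rw [hS2 k j l, hS1 j k l, mul_comm]
      simp only [c1]
      exact tri _
    · -- T2 = S
      have c2 : ∀ j k l : Fin n, ((Φ k j l * Θ ℓ k : ℝ) : ℂ) • (X j * X l)
          = ((Θ ℓ k * Φ j k l : ℝ) : ℂ) • (X j * X l) := by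
        intro j k l
        rw [hS2 k j l, mul_comm]
      simp only [c2]
      exact Finset.sum_comm
  · -- T3 = S
    refine Finset.sum_congr rfl fun j _ => Finset.sum_congr rfl fun k _ =>
      Finset.sum_congr rfl fun l _ => ?_
    rw [mul_comm]
end
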